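/- Let G be a finite simple graph with no isolated vertices, n vertices, minimum degree δ and maximum degree Δ. Then (M_1(G) + 2M_2^{1/2}(G))/(2Δ²) − n/2 ≤ R(G) ≤ (M_1(G) + 2M_2^{1/2}(G))/(2δ²) − n/2, with equality in either bound if and only if G is regular. -/

import Mathlib

open Finset

variable {V : Type*}

/-- Randić index: `Σ_{uv∈E} (d_u d_v)^{-1/2}`, written as half a double sum over vertices. -/
noncomputable def randicIndex [Fintype V] (G : SimpleGraph V) [DecidableRel G.Adj] : ℝ :=
  (1 / 2) * ∑ u, ∑ v ∈ G.neighborFinset u,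
    1 / Real.sqrt ((G.degree u : ℝ) * (G.degree v : ℝ))

/-- First Zagreb index `M₁(G) = Σ_{u∈V} d_u²`. -/
noncomputable def zagreb1 [Fintype V] (G : SimpleGraph V) [DecidableRel G.Adj] : ℝ :=
  ∑ u, (G.degree u : ℝ)^2

/-- Variable second Zagreb index with exponent 1/2: `M₂^{1/2}(G) = Σ_{uv∈E} √(d_u d_v)`. -/
noncomputable def zagreb2half [Fintype V] (G : SimpleGraph V) [DecidableRel G.Adj] : ℝ :=
  (1 / 2) * ∑ u, ∑ v ∈ G.neighborFinset u,
    Real.sqrt ((G.degree u : ℝ) * (G.degree v : ℝ))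

private lemma key_eq (a s c : ℝ) (ha : a ≠ 0) (hs : s ≠ 0) (hc : c ≠ 0) :
    (a + s)/(2*c^2) - 1/(2*a) - 1/(2*s) = (a+s)*(a*s - c^2)/(2*c^2*a*s) := by
  field_simp
  ring

private lemma key_ineq (a b c : ℝ) (ha : 0 < a) (hb : 0 < b) (hc : 0 < c)
    (hac : a ≤ c) (hbc : b ≤ c) :
    ((a + Real.sqrt (a*b))/(2*c^2) - 1/(2*a) ≤ 1/(2*Real.sqrt (a*b))) ∧
    ((a + Real.sqrt (a*b))/(2*c^2) - 1/(2*a) = 1/(2*Real.sqrt (a*b)) ↔ a = c ∧ b = c) := by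
  set s := Real.sqrt (a*b) with hsdef
  have hs : 0 < s := Real.sqrt_pos.2 (mul_pos ha hb)
  have hsc : s ≤ c := by
    calc s ≤ Real.sqrt (c*c) := Real.sqrt_le_sqrt (by nlinarith)
    _ = c := Real.sqrt_mul_self hc.le
  have hid := key_eq a s c ha.ne' hs.ne' hc.ne'
  have hden : 0 < 2*c^2*a*s := by positivity
  have has : a*s ≤ c^2 := by nlinarith
  constructor
  · have : (a+s)*(a*s - c^2)/(2*c^2*a*s) ≤ 0 := by
      apply div_nonpos_of_nonpos_of_nonneg _ hden.le
      nlinarith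
    linarith [hid, this]
  · constructor
    · intro h
      have h0 : (a+s)*(a*s - c^2)/(2*c^2*a*s) = 0 := by linarith [hid]
      have h1 : (a+s)*(a*s - c^2) = 0 := by
        have := (div_eq_zero_iff.1 h0)
        rcases this with h' | h'
        · exact h'
        · exact absurd h' hden.ne'
      have h2 : a*s = c^2 := by
        rcases mul_eq_zero.1 h1 with h' | h'
        · nlinarith
        · linarith
      have hac' : a = c := by nlinarith
      have hsc' : s = c := by nlinarith
      have hab : a*b = c^2 := by
        have := Real.sq_sqrt (mul_pos ha hb).le
        rw [← hsdef] at this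
        nlinarith [this]
      refine ⟨hac', by nlinarith⟩
    · rintro ⟨h1, h2⟩
      have hsc2 : s = c := by rw [hsdef, h1, h2, Real.sqrt_mul_self hc.le]
      have : (a+s)*(a*s - c^2) = 0 := by rw [h1, hsc2]; ring
      have h0 : (a+s)*(a*s - c^2)/(2*c^2*a*s) = 0 := by rw [this]; simp
      linarith [hid, h0]

private lemma key_ineq' (a b c : ℝ) (ha : 0 < a) (hb : 0 < b) (hc : 0 < c)
    (hac : c ≤ a) (hbc : c ≤ b) :
    (1/(2*Real.sqrt (a*b)) ≤ (a + Real.sqrt (a*b))/(2*c^2) - 1/(2*a)) ∧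
    (1/(2*Real.sqrt (a*b)) = (a + Real.sqrt (a*b))/(2*c^2) - 1/(2*a) ↔ a = c ∧ b = c) := by
  set s := Real.sqrt (a*b) with hsdef
  have hs : 0 < s := Real.sqrt_pos.2 (mul_pos ha hb)
  have hsc : c ≤ s := by
    calc c = Real.sqrt (c*c) := (Real.sqrt_mul_self hc.le).symm
    _ ≤ s := Real.sqrt_le_sqrt (by nlinarith)
  have hid := key_eq a s c ha.ne' hs.ne' hc.ne'
  have hden : 0 < 2*c^2*a*s := by positivity
  have has : c^2 ≤ a*s := by nlinarith
  constructor
  · have : 0 ≤ (a+s)*(a*s - c^2)/(2*c^2*a*s) := by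
      apply div_nonneg _ hden.le
      nlinarith
    linarith [hid, this]
  · constructor
    · intro h
      have h0 : (a+s)*(a*s - c^2)/(2*c^2*a*s) = 0 := by linarith [hid]
      have h1 : (a+s)*(a*s - c^2) = 0 := by
        rcases div_eq_zero_iff.1 h0 with h' | h'
        · exact h'
        · exact absurd h' hden.ne'
      have h2 : a*s = c^2 := by
        rcases mul_eq_zero.1 h1 with h' | h'
        · nlinarith
        · linarith
      have hac' : a = c := by nlinarith
      have hsc' : s = c := by nlinarith
      have hab : a*b = c^2 := by
        have := Real.sq_sqrt (mul_pos ha hb).le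
        rw [← hsdef] at this
        nlinarith [this]
      exact ⟨hac', by nlinarith⟩
    · rintro ⟨h1, h2⟩
      have hsc2 : s = c := by rw [hsdef, h1, h2, Real.sqrt_mul_self hc.le]
      have : (a+s)*(a*s - c^2) = 0 := by rw [h1, hsc2]; ring
      have h0 : (a+s)*(a*s - c^2)/(2*c^2*a*s) = 0 := by rw [this]; simp
      linarith [hid, h0]

private lemma randic_rewrite [Fintype V] (G : SimpleGraph V) [DecidableRel G.Adj] :
    randicIndex G = ∑ u, ∑ v ∈ G.neighborFinset u,
      1 / (2 * Real.sqrt ((G.degree u : ℝ) * (G.degree v : ℝ))) := by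
  rw [randicIndex, Finset.mul_sum]
  refine Finset.sum_congr rfl fun u _ => ?_
  rw [Finset.mul_sum]
  refine Finset.sum_congr rfl fun v _ => ?_
  rw [div_mul_div_comm, one_mul]

private lemma lhs_rewrite [Fintype V] (G : SimpleGraph V) [DecidableRel G.Adj]
    (hdeg : ∀ v, 0 < G.degree v) (c : ℝ) :
    (zagreb1 G + 2 * zagreb2half G) / (2 * c^2) - (Fintype.card V : ℝ) / 2
    = ∑ u, ∑ v ∈ G.neighborFinset u,
        (((G.degree u : ℝ) + Real.sqrt ((G.degree u : ℝ) * (G.degree v : ℝ))) / (2 * c^2)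
          - 1 / (2 * (G.degree u : ℝ))) := by
  have step : ∀ u, ∑ v ∈ G.neighborFinset u,
      (((G.degree u : ℝ) + Real.sqrt ((G.degree u : ℝ) * (G.degree v : ℝ))) / (2 * c^2)
          - 1 / (2 * (G.degree u : ℝ)))
      = ((G.degree u : ℝ)^2 + ∑ v ∈ G.neighborFinset u,
          Real.sqrt ((G.degree u : ℝ) * (G.degree v : ℝ))) / (2 * c^2) - 1/2 := by
    intro u
    have hdu : ((G.degree u : ℝ)) ≠ 0 := by
      exact_mod_cast (hdeg u).ne'
    rw [Finset.sum_sub_distrib, ← Finset.sum_div, Finset.sum_add_distrib,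
      Finset.sum_const, Finset.sum_const, G.card_neighborFinset_eq_degree,
      nsmul_eq_mul, nsmul_eq_mul]
    congr 1
    · congr 2
      rw [sq]
    · field_simp
  rw [Finset.sum_congr rfl fun u _ => step u, Finset.sum_sub_distrib, ← Finset.sum_div,
    Finset.sum_add_distrib, Finset.sum_const, nsmul_eq_mul, Finset.card_univ]
  rw [zagreb1, zagreb2half]
  ring

private lemma core_max [Fintype V] (G : SimpleGraph V) [DecidableRel G.Adj]
    (hdeg : ∀ v, 0 < G.degree v) (c : ℝ) (hc : 0 < c)
    (hle : ∀ v, (G.degree v : ℝ) ≤ c) :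
    ((zagreb1 G + 2 * zagreb2half G) / (2 * c^2) - (Fintype.card V : ℝ) / 2 ≤ randicIndex G) ∧
    ((zagreb1 G + 2 * zagreb2half G) / (2 * c^2) - (Fintype.card V : ℝ) / 2 = randicIndex G
      ↔ ∀ v, (G.degree v : ℝ) = c) := by
  have hd : ∀ v, (0:ℝ) < (G.degree v : ℝ) := fun v => by exact_mod_cast hdeg v
  rw [lhs_rewrite G hdeg c, randic_rewrite G]
  have hterm : ∀ u ∈ (univ : Finset V), ∀ v ∈ G.neighborFinset u,
      ((G.degree u : ℝ) + Real.sqrt ((G.degree u : ℝ) * (G.degree v : ℝ))) / (2 * c^2)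
        - 1 / (2 * (G.degree u : ℝ))
      ≤ 1 / (2 * Real.sqrt ((G.degree u : ℝ) * (G.degree v : ℝ))) :=
    fun u _ v _ => (key_ineq _ _ c (hd u) (hd v) hc (hle u) (hle v)).1
  have houter : ∀ u ∈ (univ : Finset V),
      ∑ v ∈ G.neighborFinset u, (((G.degree u : ℝ) + Real.sqrt ((G.degree u : ℝ) * (G.degree v : ℝ))) / (2 * c^2)
        - 1 / (2 * (G.degree u : ℝ)))
      ≤ ∑ v ∈ G.neighborFinset u, 1 / (2 * Real.sqrt ((G.degree u : ℝ) * (G.degree v : ℝ))) :=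
    fun u hu => Finset.sum_le_sum (hterm u hu)
  refine ⟨Finset.sum_le_sum houter, ?_⟩
  rw [Finset.sum_eq_sum_iff_of_le houter]
  constructor
  · intro h u
    have hu := h u (mem_univ u)
    rw [Finset.sum_eq_sum_iff_of_le (hterm u (mem_univ u))] at hu
    obtain ⟨v, hv⟩ := Finset.card_pos.1
      (by rw [G.card_neighborFinset_eq_degree]; exact hdeg u)
    exact ((key_ineq _ _ c (hd u) (hd v) hc (hle u) (hle v)).2.1 (hu v hv)).1
  · intro h u _
    rw [Finset.sum_eq_sum_iff_of_le (hterm u (mem_univ u))]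
    intro v _
    exact (key_ineq _ _ c (hd u) (hd v) hc (hle u) (hle v)).2.2 ⟨h u, h v⟩

private lemma core_min [Fintype V] (G : SimpleGraph V) [DecidableRel G.Adj]
    (hdeg : ∀ v, 0 < G.degree v) (c : ℝ) (hc : 0 < c)
    (hge : ∀ v, c ≤ (G.degree v : ℝ)) :
    (randicIndex G ≤ (zagreb1 G + 2 * zagreb2half G) / (2 * c^2) - (Fintype.card V : ℝ) / 2) ∧
    (randicIndex G = (zagreb1 G + 2 * zagreb2half G) / (2 * c^2) - (Fintype.card V : ℝ) / 2
      ↔ ∀ v, (G.degree v : ℝ) = c) := by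
  have hd : ∀ v, (0:ℝ) < (G.degree v : ℝ) := fun v => by exact_mod_cast hdeg v
  rw [lhs_rewrite G hdeg c, randic_rewrite G]
  have hterm : ∀ u ∈ (univ : Finset V), ∀ v ∈ G.neighborFinset u,
      1 / (2 * Real.sqrt ((G.degree u : ℝ) * (G.degree v : ℝ)))
      ≤ ((G.degree u : ℝ) + Real.sqrt ((G.degree u : ℝ) * (G.degree v : ℝ))) / (2 * c^2)
        - 1 / (2 * (G.degree u : ℝ)) :=
    fun u _ v _ => (key_ineq' _ _ c (hd u) (hd v) hc (hge u) (hge v)).1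
  have houter : ∀ u ∈ (univ : Finset V),
      ∑ v ∈ G.neighborFinset u, 1 / (2 * Real.sqrt ((G.degree u : ℝ) * (G.degree v : ℝ)))
      ≤ ∑ v ∈ G.neighborFinset u, (((G.degree u : ℝ) + Real.sqrt ((G.degree u : ℝ) * (G.degree v : ℝ))) / (2 * c^2)
        - 1 / (2 * (G.degree u : ℝ))) :=
    fun u hu => Finset.sum_le_sum (hterm u hu)
  refine ⟨Finset.sum_le_sum houter, ?_⟩
  rw [Finset.sum_eq_sum_iff_of_le houter]
  constructor
  · intro h u
    have hu := h u (mem_univ u)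
    rw [Finset.sum_eq_sum_iff_of_le (hterm u (mem_univ u))] at hu
    obtain ⟨v, hv⟩ := Finset.card_pos.1
      (by rw [G.card_neighborFinset_eq_degree]; exact hdeg u)
    exact ((key_ineq' _ _ c (hd u) (hd v) hc (hge u) (hge v)).2.1 (hu v hv)).1
  · intro h u _
    rw [Finset.sum_eq_sum_iff_of_le (hterm u (mem_univ u))]
    intro v _
    exact (key_ineq' _ _ c (hd u) (hd v) hc (hge u) (hge v)).2.2 ⟨h u, h v⟩

theorem randic_zagreb_plus_bounds [Fintype V] (G : SimpleGraph V) [DecidableRel G.Adj]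
    (hiso : ∀ v : V, 0 < G.degree v) :
    ((zagreb1 G + 2 * zagreb2half G) / (2 * (G.maxDegree : ℝ)^2) -
        (Fintype.card V : ℝ) / 2 ≤ randicIndex G ∧
      randicIndex G ≤ (zagreb1 G + 2 * zagreb2half G) / (2 * (G.minDegree : ℝ)^2) -
        (Fintype.card V : ℝ) / 2) ∧
    ((zagreb1 G + 2 * zagreb2half G) / (2 * (G.maxDegree : ℝ)^2) -
        (Fintype.card V : ℝ) / 2 = randicIndex G ↔ ∃ k, G.IsRegularOfDegree k) ∧
    (randicIndex G = (zagreb1 G + 2 * zagreb2half G) / (2 * (G.minDegree : ℝ)^2) -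
        (Fintype.card V : ℝ) / 2 ↔ ∃ k, G.IsRegularOfDegree k) := by
  cases isEmpty_or_nonempty V with
  | inl hV =>
    have h0 : randicIndex G = 0 := by simp [randicIndex]
    have h1 : zagreb1 G = 0 := by simp [zagreb1]
    have h2 : zagreb2half G = 0 := by simp [zagreb2half]
    have hcard : (Fintype.card V : ℝ) = 0 := by simp
    rw [h0, h1, h2, hcard]
    refine ⟨⟨by simp, by simp⟩, ?_, ?_⟩ <;>
      simp only [mul_zero, add_zero, zero_div, zero_sub, neg_zero, zero_add] <;>
      exact ⟨fun _ => ⟨0, fun v => isEmptyElim v⟩, fun _ => by simp⟩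
  | inr hV =>
    have hΔ : 0 < G.maxDegree :=
      lt_of_lt_of_le (hiso (Classical.arbitrary V)) (G.degree_le_maxDegree _)
    have hδ : 0 < G.minDegree := by
      obtain ⟨v, hv⟩ := G.exists_minimal_degree_vertex
      rw [hv]
      exact hiso v
    have hΔR : (0:ℝ) < (G.maxDegree : ℝ) := by exact_mod_cast hΔ
    have hδR : (0:ℝ) < (G.minDegree : ℝ) := by exact_mod_cast hδ
    have hle : ∀ v, (G.degree v : ℝ) ≤ (G.maxDegree : ℝ) := fun v => by
      exact_mod_cast G.degree_le_maxDegree v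
    have hge : ∀ v, (G.minDegree : ℝ) ≤ (G.degree v : ℝ) := fun v => by
      exact_mod_cast G.minDegree_le_degree v
    obtain ⟨hmax_le, hmax_iff⟩ := core_max G hiso _ hΔR hle
    obtain ⟨hmin_le, hmin_iff⟩ := core_min G hiso _ hδR hge
    have hmaxreg : (∀ v, (G.degree v : ℝ) = (G.maxDegree : ℝ)) ↔ ∃ k, G.IsRegularOfDegree k := by
      constructor
      · intro h
        exact ⟨G.maxDegree, fun v => by exact_mod_cast h v⟩
      · rintro ⟨k, hk⟩ v
        have hkmax : G.maxDegree = k := le_antisymm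
          (G.maxDegree_le_of_forall_degree_le k fun v => (hk v).le)
          ((hk (Classical.arbitrary V)) ▸ G.degree_le_maxDegree (Classical.arbitrary V))
        rw [hk v, hkmax]
    have hminreg : (∀ v, (G.degree v : ℝ) = (G.minDegree : ℝ)) ↔ ∃ k, G.IsRegularOfDegree k := by
      constructor
      · intro h
        exact ⟨G.minDegree, fun v => by exact_mod_cast h v⟩
      · rintro ⟨k, hk⟩ v
        have hkmin : G.minDegree = k := le_antisymm
          ((hk (Classical.arbitrary V)) ▸ G.minDegree_le_degree (Classical.arbitrary V))
          (G.le_minDegree_of_forall_le_degree k fun v => (hk v).ge)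
        rw [hk v, hkmin]
    exact ⟨⟨hmax_le, hmin_le⟩, hmax_iff.trans hmaxreg, hmin_iff.trans hminreg⟩
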